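/- Let φ: A^ω → ℝ be continuous and shift-deterministic. Then for each a ∈ A, the induced map s[a]: φ(A^ω) → φ(A^ω) with s[a](φ(β)) = φ(aβ) is continuous (with respect to the subspace topology of ℝ on φ(A^ω)). -/

import Mathlib

open Filter Topology

/-- Concatenation of a finite word with an infinite word. -/
def wcat {A : Type*} (u : List A) (β : ℕ → A) : ℕ → A :=
  fun n => if h : n < u.length then u.get ⟨n, h⟩ else β (n - u.length)

/-- A payoff is shift-deterministic if `φ(β) = φ(γ)` implies `φ(aβ) = φ(aγ)`. -/
def ShiftDet {A : Type*} (φ : (ℕ → A) → ℝ) : Prop :=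
  ∀ (a : A) (β γ : ℕ → A), φ β = φ γ → φ (wcat [a] β) = φ (wcat [a] γ)

/-- For a continuous shift-deterministic payoff, each induced shift map
`s[a] : φ(A^ω) → φ(A^ω)` with `s[a](φ β) = φ(aβ)` is continuous on the image `φ(A^ω)`. -/
theorem shift_map_continuous
    {A : Type*} [Fintype A] [Nonempty A] [TopologicalSpace A] [DiscreteTopology A]
    (φ : (ℕ → A) → ℝ) (hcont : Continuous φ) (hsd : ShiftDet φ)
    (a : A) (s : ℝ → ℝ) (hs : ∀ β : ℕ → A, s (φ β) = φ (wcat [a] β)) :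
    ContinuousOn s (Set.range φ) := by
  -- ψ : A^ω → range φ is a quotient map (cont. surjection from compact to T2)
  set ψ : (ℕ → A) → Set.range φ := Set.rangeFactorization φ with hψ
  have hψc : Continuous ψ := hcont.subtype_mk _
  have hψs : Function.Surjective ψ := Set.rangeFactorization_surjective
  have hq : Topology.IsQuotientMap ψ :=
    (hψc.isClosedMap).isQuotientMap hψc hψs
  rw [continuousOn_iff_continuous_restrict]
  rw [hq.continuous_iff]
  have : (Set.range φ).domRestrict s ∘ ψ = fun β => φ (wcat [a] β) := by
    funext β
    simp [ψ, Set.rangeFactorization, Set.domRestrict, hs]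
  rw [this]
  have hpre : Continuous (fun β : ℕ → A => wcat [a] β) := by
    apply continuous_pi
    intro n
    cases n with
    | zero => simpa [wcat] using continuous_const
    | succ m =>
      simp only [wcat, List.length_singleton]
      have : ∀ β : ℕ → A, (if h : m + 1 < 1 then ([a] : List A).get ⟨m + 1, h⟩
          else β (m + 1 - 1)) = β m := by
        intro β; simp
      simpa [this] using continuous_apply m
  exact hcont.comp hpre
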